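/- Let ε₊ > 0, ε₋ > 0, a > 0, b > 0, c > 0, and let n₀ be a natural number. Suppose (λₙ)_{n≥1} is a real sequence such that for all n > n₀ one has λₙ ∈ (−ε₋(nπ/c)², ε₊(nπ/c)²) and λₙ satisfies the flat characteristic equation tanh(a·√((nπ/c)² − λₙ/ε₊))/(ε₊·√((nπ/c)² − λₙ/ε₊)) = tanh(b·√((nπ/c)² + λₙ/ε₋))/(ε₋·√((nπ/c)² + λₙ/ε₋)), and that λₙ converges to some finite Λ ∈ ℝ. Then ε₊ = ε₋. -/

import Mathlib

open Real Filter

lemma my_tendsto_sqrt_atTop : Tendsto Real.sqrt atTop atTop := by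
  apply tendsto_atTop_atTop.2
  intro M
  refine ⟨M ^ 2, fun x hx => ?_⟩
  calc M ≤ |M| := le_abs_self M
    _ = Real.sqrt (M ^ 2) := (Real.sqrt_sq_eq_abs M).symm
    _ ≤ Real.sqrt x := Real.sqrt_le_sqrt hx

lemma my_tanh_eq (x : ℝ) :
    Real.tanh x = (1 - Real.exp (-(2 * x))) / (1 + Real.exp (-(2 * x))) := by
  rw [Real.tanh_eq_sinh_div_cosh, Real.sinh_eq, Real.cosh_eq]
  have h1 : Real.exp x ≠ 0 := (Real.exp_pos x).ne'
  have h2 : (0:ℝ) < 1 + Real.exp (-(2 * x)) := by positivity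
  have h3 : (0:ℝ) < Real.exp x + Real.exp (-x) := by positivity
  have e1 : Real.exp (-(2 * x)) = Real.exp (-x) * Real.exp (-x) := by
    rw [← Real.exp_add]; ring_nf
  have e2 : Real.exp x * Real.exp (-x) = 1 := by
    rw [← Real.exp_add]; simp
  rw [div_eq_div_iff (by positivity) h2.ne']
  linear_combination Real.exp x * e1 + Real.exp (-x) * e2

lemma my_tendsto_tanh_atTop : Tendsto Real.tanh atTop (nhds 1) := by
  have h2x : Tendsto (fun x : ℝ => -(2 * x)) atTop atBot := by
    apply tendsto_neg_atBot_iff.2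
    exact (tendsto_id.const_mul_atTop (by norm_num : (0:ℝ) < 2))
  have hexp : Tendsto (fun x : ℝ => Real.exp (-(2 * x))) atTop (nhds 0) :=
    Real.tendsto_exp_atBot.comp h2x
  have : Tendsto (fun x : ℝ => (1 - Real.exp (-(2 * x))) / (1 + Real.exp (-(2 * x))))
      atTop (nhds ((1 - 0) / (1 + 0))) :=
    (tendsto_const_nhds.sub hexp).div (tendsto_const_nhds.add hexp) (by norm_num)
  norm_num at this
  exact this.congr fun x => (my_tanh_eq x).symm

/-- If roots λₙ of the flat characteristic equation (with contrast
ε₊/ε₋) converge to a finite limit Λ, then ε₊ = ε₋: for non-critical contrast the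
roots have no finite accumulation point. -/
theorem stmt_5 (εp εm a b c : ℝ) (hεp : 0 < εp) (hεm : 0 < εm)
    (ha : 0 < a) (hb : 0 < b) (hc : 0 < c) (n₀ : ℕ)
    (lam : ℕ → ℝ) (Λ : ℝ)
    (hmem : ∀ n : ℕ, n₀ < n →
      lam n ∈ Set.Ioo (-(εm * ((n : ℝ) * π / c) ^ 2)) (εp * ((n : ℝ) * π / c) ^ 2))
    (heq : ∀ n : ℕ, n₀ < n →
      Real.tanh (a * Real.sqrt (((n : ℝ) * π / c) ^ 2 - lam n / εp)) /
          (εp * Real.sqrt (((n : ℝ) * π / c) ^ 2 - lam n / εp))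
        = Real.tanh (b * Real.sqrt (((n : ℝ) * π / c) ^ 2 + lam n / εm)) /
          (εm * Real.sqrt (((n : ℝ) * π / c) ^ 2 + lam n / εm)))
    (hlim : Tendsto lam atTop (nhds Λ)) :
    εp = εm := by
  set g : ℕ → ℝ := fun n => ((n : ℝ) * π / c) ^ 2 with hg_def
  set t : ℕ → ℝ := fun n => Real.sqrt (g n - lam n / εp) with ht_def
  set s : ℕ → ℝ := fun n => Real.sqrt (g n + lam n / εm) with hs_def
  -- positivity facts
  have hgt : ∀ n : ℕ, n₀ < n → 0 < g n - lam n / εp := by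
    intro n hn
    have h := (hmem n hn).2
    have : lam n / εp < g n := (div_lt_iff₀ hεp).2 (by show lam n < ((n:ℝ) * π / c) ^ 2 * εp; nlinarith)
    linarith
  have hgs : ∀ n : ℕ, n₀ < n → 0 < g n + lam n / εm := by
    intro n hn
    have h := (hmem n hn).1
    have : -(g n) < lam n / εm := (lt_div_iff₀ hεm).2 (by show -(((n:ℝ) * π / c) ^ 2) * εm < lam n; nlinarith)
    linarith
  have htpos : ∀ n : ℕ, n₀ < n → 0 < t n := fun n hn => Real.sqrt_pos.2 (hgt n hn)
  have hspos : ∀ n : ℕ, n₀ < n → 0 < s n := fun n hn => Real.sqrt_pos.2 (hgs n hn)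
  -- cross-multiplied equation
  have hcross : ∀ n : ℕ, n₀ < n →
      εm * (s n / t n) * Real.tanh (a * t n) = εp * Real.tanh (b * s n) := by
    intro n hn
    have h := heq n hn
    have h1 : (0:ℝ) < εp * t n := mul_pos hεp (htpos n hn)
    have h2 : (0:ℝ) < εm * s n := mul_pos hεm (hspos n hn)
    rw [div_eq_div_iff h1.ne' h2.ne'] at h
    have htne : t n ≠ 0 := (htpos n hn).ne'
    field_simp
    rw [mul_comm (t n) a, mul_comm (s n) b]; linear_combination (h : Real.tanh (a * t n) * (εm * s n) = Real.tanh (b * s n) * (εp * t n))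
  -- limits
  have hbase : Tendsto (fun n : ℕ => (n : ℝ) * (π / c)) atTop atTop :=
    tendsto_natCast_atTop_atTop.atTop_mul_const (div_pos Real.pi_pos hc)
  have hg_top : Tendsto g atTop atTop := by
    have : Tendsto (fun x : ℝ => x ^ 2) atTop atTop := tendsto_pow_atTop (by norm_num)
    have := this.comp hbase
    refine this.congr fun n => ?_
    simp only [Function.comp, hg_def]
    ring
  have hlp : Tendsto (fun n => lam n / εp) atTop (nhds (Λ / εp)) := hlim.div_const εp
  have hlm : Tendsto (fun n => lam n / εm) atTop (nhds (Λ / εm)) := hlim.div_const εm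
  have htt : Tendsto (fun n => g n - lam n / εp) atTop atTop := by
    have := (hlp.neg).add_atTop hg_top
    refine this.congr fun n => ?_; ring
  have hst : Tendsto (fun n => g n + lam n / εm) atTop atTop := by
    have := hlm.add_atTop hg_top
    refine this.congr fun n => ?_; ring
  have ht_top : Tendsto t atTop atTop := my_tendsto_sqrt_atTop.comp htt
  have hs_top : Tendsto s atTop atTop := my_tendsto_sqrt_atTop.comp hst
  have htanh_t : Tendsto (fun n => Real.tanh (a * t n)) atTop (nhds 1) :=
    my_tendsto_tanh_atTop.comp (ht_top.const_mul_atTop ha)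
  have htanh_s : Tendsto (fun n => Real.tanh (b * s n)) atTop (nhds 1) :=
    my_tendsto_tanh_atTop.comp (hs_top.const_mul_atTop hb)
  -- ratio s/t → 1
  have hratio : Tendsto (fun n => s n / t n) atTop (nhds 1) := by
    have hr : Tendsto (fun n => (g n + lam n / εm) / (g n - lam n / εp)) atTop (nhds 1) := by
      have hq : Tendsto (fun n => (lam n / εm + lam n / εp) / (g n - lam n / εp))
          atTop (nhds 0) := (hlm.add hlp).div_atTop htt
      have := (tendsto_const_nhds : Tendsto (fun _ : ℕ => (1:ℝ)) atTop (nhds 1)).add hq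
      rw [add_zero] at this
      apply this.congr'
      filter_upwards [eventually_gt_atTop n₀] with n hn
      have h := hgt n hn
      rw [eq_div_iff h.ne', add_mul, one_mul, div_mul_cancel₀ _ h.ne']
      ring
    have hsq : Tendsto (fun n => Real.sqrt ((g n + lam n / εm) / (g n - lam n / εp)))
        atTop (nhds 1) := by
      have := (Real.continuous_sqrt.tendsto 1).comp hr
      simpa [Function.comp_def] using this
    apply hsq.congr'
    filter_upwards [eventually_gt_atTop n₀] with n hn
    rw [Real.sqrt_div (hgs n hn).le]
  -- conclude
  have hF : Tendsto (fun n => εm * (s n / t n) * Real.tanh (a * t n)) atTop (nhds εm) := by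
    have := (((tendsto_const_nhds : Tendsto (fun _ : ℕ => εm) atTop (nhds εm))).mul hratio).mul htanh_t
    simpa using this
  have hG : Tendsto (fun n => εp * Real.tanh (b * s n)) atTop (nhds εp) := by
    have := ((tendsto_const_nhds : Tendsto (fun _ : ℕ => εp) atTop (nhds εp))).mul htanh_s
    simpa using this
  have hFG : Tendsto (fun n => εm * (s n / t n) * Real.tanh (a * t n)) atTop (nhds εp) := by
    apply hG.congr'
    filter_upwards [eventually_gt_atTop n₀] with n hn
    exact (hcross n hn).symm
  exact (tendsto_nhds_unique hF hFG).symm
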